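/- arXiv:1909.12412 — 4 statements merged into one kernel-verified Lean document; each statement's English description precedes it below -/
import Mathlib

section
/- Suppose the law of a random element X of an inner-product space is H-symmetric about a unique point f_c, meaning P(X ∈ H) ≥ 1/2 for every closed halfspace H containing f_c and P(X ∈ H) < 1/2 for every closed halfspace not containing f_c. Then the inner-product-based depth D_ip(f) = inf_{‖g‖=1, g ∈ G} P[⟨X − f, g⟩ ≥ 0] is maximized at f = f_c, with D_ip(f_c) ≥ 1/2 and D_ip(f) < 1/2 for any f ≠ f_c (provided G contains a unit vector separating f from f_c). -/
open MeasureTheory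

/-- Maximality at the center of the inner-product-based depth under halfspace
symmetry: if the law of `X` is H-symmetric about `f_c` (probability at least 1/2
for every closed halfspace containing `f_c`, and strictly less than 1/2 for every
closed halfspace not containing `f_c`), then
`D_ip(f_c) ≥ 1/2`, and `D_ip(f) < 1/2` for every `f ≠ f_c` for which `G`
contains a unit vector separating `f` from `f_c`. -/
theorem ip_depth_max_at_center {Ω H : Type*} [MeasurableSpace Ω]
    [NormedAddCommGroup H] [InnerProductSpace ℝ H]
    (μ : Measure Ω) [IsProbabilityMeasure μ]
    (X : Ω → H) (G : Set H) (f_c : H)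
    (hsym_in : ∀ g : H, g ≠ 0 → ∀ h : H, (0 : ℝ) ≤ inner ℝ (f_c - h) g →
      (1 : ENNReal) / 2 ≤ μ {ω | (0 : ℝ) ≤ inner ℝ (X ω - h) g})
    (hsym_out : ∀ g : H, g ≠ 0 → ∀ h : H, inner ℝ (f_c - h) g < (0 : ℝ) →
      μ {ω | (0 : ℝ) ≤ inner ℝ (X ω - h) g} < 1 / 2)
    (D : H → ENNReal)
    (hD : ∀ f, D f = ⨅ g : {g : H // g ∈ G ∧ ‖g‖ = 1},
      μ {ω | (0 : ℝ) ≤ inner ℝ (X ω - f) (g : H)}) :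
    (1 : ENNReal) / 2 ≤ D f_c ∧
    ∀ f : H, f ≠ f_c →
      (∃ g ∈ G, ‖g‖ = 1 ∧ inner ℝ (f_c - f) g < (0 : ℝ)) →
      D f < 1 / 2 := by
  constructor
  · rw [hD]
    refine le_iInf fun g => ?_
    have hg0 : (g : H) ≠ 0 := fun h => by have := g.2.2; rw [h] at this; simp at this
    exact hsym_in g hg0 f_c (by simp)
  · rintro f hf ⟨g, hgG, hg1, hlt⟩
    have hg0 : g ≠ 0 := fun h => by rw [h] at hg1; simp at hg1
    calc D f ≤ μ {ω | (0 : ℝ) ≤ inner ℝ (X ω - f) g} := by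
          rw [hD]; exact iInf_le _ (⟨g, hgG, hg1⟩ : {g : H // g ∈ G ∧ ‖g‖ = 1})
      _ < 1 / 2 := hsym_out g hg0 f hlt
end

section
/- The inner-product-based depth vanishes at infinity: D_ip(f) = inf_{g ∈ G, ‖g‖=1} P[⟨X − f, g⟩ ≥ 0] ≤ P[‖X‖ ≥ ‖f‖] whenever f/‖f‖ ∈ G (f ≠ 0); consequently D_ip(f) → 0 as ‖f‖ → ∞. -/
open MeasureTheory

/-- The inner-product-based depth vanishes at infinity:
if `f ≠ 0` and `f/‖f‖ ∈ G`, then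
`D_ip(f) ≤ P[‖X‖ ≥ ‖f‖]`; consequently for every `ε > 0` there is `M` such that
`‖f‖ ≥ M` (and `f/‖f‖ ∈ G`) implies `D_ip(f) ≤ ε`. -/
theorem ip_depth_vanishing_at_infinity {Ω H : Type*} [MeasurableSpace Ω]
    [NormedAddCommGroup H] [InnerProductSpace ℝ H]
    [MeasurableSpace H] [OpensMeasurableSpace H]
    (μ : Measure Ω) [IsProbabilityMeasure μ]
    (X : Ω → H) (hX : Measurable X) (G : Set H)
    (D : H → ENNReal)
    (hD : ∀ f, D f = ⨅ g : {g : H // g ∈ G ∧ ‖g‖ = 1},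
      μ {ω | (0 : ℝ) ≤ inner ℝ (X ω - f) (g : H)}) :
    (∀ f : H, f ≠ 0 → ‖f‖⁻¹ • f ∈ G → D f ≤ μ {ω | ‖f‖ ≤ ‖X ω‖}) ∧
    (∀ ε : ENNReal, 0 < ε → ∃ M : ℝ, ∀ f : H, f ≠ 0 → ‖f‖⁻¹ • f ∈ G →
      M ≤ ‖f‖ → D f ≤ ε) := by
  have key : ∀ f : H, f ≠ 0 → ‖f‖⁻¹ • f ∈ G → D f ≤ μ {ω | ‖f‖ ≤ ‖X ω‖} := by
    intro f hf hG
    have hfpos : 0 < ‖f‖ := norm_pos_iff.mpr hf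
    have hnorm : ‖‖f‖⁻¹ • f‖ = 1 := by
      rw [norm_smul, norm_inv, norm_norm, inv_mul_cancel₀ hfpos.ne']
    rw [hD]
    refine le_trans (iInf_le _ ⟨‖f‖⁻¹ • f, hG, hnorm⟩) (measure_mono ?_)
    intro ω hω
    simp only [Set.mem_setOf_eq] at hω ⊢
    have h1 : (0 : ℝ) ≤ ‖f‖⁻¹ * (inner ℝ (X ω) f - ‖f‖ ^ 2) := by
      have := hω
      rw [inner_smul_right, inner_sub_left, real_inner_self_eq_norm_sq] at this
      linarith [this]
    have h2 : ‖f‖ ^ 2 ≤ inner ℝ (X ω) f := by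
      nlinarith [inv_pos.mpr hfpos, mul_pos (inv_pos.mpr hfpos) hfpos]
    have h3 : (inner ℝ (X ω) f : ℝ) ≤ ‖X ω‖ * ‖f‖ := real_inner_le_norm _ _
    nlinarith
  refine ⟨key, ?_⟩
  intro ε hε
  set s : ℕ → Set Ω := fun n => {ω | (n : ℝ) ≤ ‖X ω‖} with hs
  have hmeas : ∀ n, MeasurableSet (s n) := fun n =>
    measurableSet_le measurable_const (hX.norm)
  have hanti : Antitone s := by
    intro m n hmn ω hω
    exact le_trans (by exact_mod_cast hmn : (m:ℝ) ≤ n) hω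
  have hempty : ⋂ n, s n = ∅ := by
    ext ω
    simp only [Set.mem_iInter, Set.mem_empty_iff_false, iff_false, not_forall]
    obtain ⟨n, hn⟩ := exists_nat_gt ‖X ω‖
    exact ⟨n, by simp [hs, not_le.mpr hn]⟩
  have htend : Filter.Tendsto (fun n => μ (s n)) Filter.atTop (nhds 0) := by
    have := tendsto_measure_iInter_atTop (fun n => (hmeas n).nullMeasurableSet) hanti
      ⟨0, measure_ne_top μ _⟩
    rwa [hempty, measure_empty] at this
  have : ∀ᶠ n in Filter.atTop, μ (s n) < ε :=
    htend.eventually_lt_const hε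
  obtain ⟨n, hn⟩ := this.exists
  refine ⟨n, fun f hf hG hMf => ?_⟩
  refine le_trans (key f hf hG) (le_trans (measure_mono ?_) hn.le)
  intro ω hω
  exact le_trans hMf hω
end

section
/- For a zero-mean finite-dimensional Gaussian process with covariance eigenvalues λ_1,…,λ_P > 0 and nonzero observation f_obs, the inner-product-based (halfspace) depth with respect to the RKHS inner product admits the closed form D_ip(f_obs) = inf_{‖g‖_{H_K}=1} P[⟨X − f_obs, g⟩_{H_K} ≥ 0] = 1 − Φ(‖f_obs‖_{H_K}), where Φ is the standard normal CDF. -/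
open MeasureTheory ProbabilityTheory
open Real
open scoped NNReal ENNReal

theorem gauss_conv_pdfReal (v w : ℝ≥0) (hv : v ≠ 0) (hw : w ≠ 0) (z : ℝ) :
    ∫ x, gaussianPDFReal 0 v x * gaussianPDFReal 0 w (z - x) = gaussianPDFReal 0 (v + w) z := by
  have hv' : (0:ℝ) < v := lt_of_le_of_ne v.coe_nonneg (by exact_mod_cast (Ne.symm hv))
  have hw' : (0:ℝ) < w := lt_of_le_of_ne w.coe_nonneg (by exact_mod_cast (Ne.symm hw))
  have hvw' : (0:ℝ) < (v:ℝ) + w := by linarith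
  set b : ℝ := ((v:ℝ) + w) / (2 * v * w) with hb_def
  have hb : 0 < b := by positivity
  set m : ℝ := v * z / ((v:ℝ) + w) with hm_def
  set C : ℝ := (√(2 * π * v))⁻¹ * (√(2 * π * w))⁻¹ * rexp (- z^2 / (2 * ((v:ℝ) + w))) with hC_def
  have key : ∀ x : ℝ, gaussianPDFReal 0 v x * gaussianPDFReal 0 w (z - x)
      = C * rexp (- b * (x - m)^2) := by
    intro x
    have hexp : rexp (- x^2 / (2*(v:ℝ))) * rexp (- (z-x)^2 / (2*(w:ℝ)))
        = rexp (- z^2 / (2 * ((v:ℝ) + w))) * rexp (- b * (x - m)^2) := by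
      rw [← Real.exp_add, ← Real.exp_add]
      congr 1
      rw [hb_def, hm_def]
      field_simp
      ring
    simp only [gaussianPDFReal, sub_zero, hC_def]
    rw [mul_mul_mul_comm, hexp, ← mul_assoc]
  rw [integral_congr_ae (ae_of_all _ key), MeasureTheory.integral_const_mul,
    integral_sub_right_eq_self (fun x => rexp (- b * x^2)) m]
  have : ∫ x, rexp (- b * x ^ 2) = √(π / b) := integral_gaussian b
  rw [this]
  simp only [gaussianPDFReal, sub_zero, hC_def]
  push_cast
  rw [mul_comm _ (rexp _), mul_comm _ (rexp _), mul_assoc]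
  congr 1
  rw [← Real.sqrt_inv, ← Real.sqrt_inv, ← Real.sqrt_inv, ← Real.sqrt_mul (by positivity),
    ← Real.sqrt_mul (by positivity)]
  congr 1
  rw [hb_def]
  field_simp

theorem gauss_conv_pdf (v w : ℝ≥0) (hv : v ≠ 0) (hw : w ≠ 0) (z : ℝ) :
    ∫⁻ x, gaussianPDF 0 v x * gaussianPDF 0 w (z - x) = gaussianPDF 0 (v + w) z := by
  have hint : Integrable (fun x => gaussianPDFReal 0 v x * gaussianPDFReal 0 w (z - x)) := by
    have hw' : (0:ℝ) < w := lt_of_le_of_ne w.coe_nonneg (by exact_mod_cast (Ne.symm hw))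
    refine Integrable.mono ((integrable_gaussianPDFReal 0 v).const_mul (√(2 * π * w))⁻¹)
      ((measurable_gaussianPDFReal 0 v).mul
        ((measurable_gaussianPDFReal 0 w).comp (measurable_const.sub measurable_id))).aestronglyMeasurable
      (ae_of_all _ fun x => ?_)
    rw [Real.norm_eq_abs, Real.norm_eq_abs,
      abs_of_nonneg (mul_nonneg (gaussianPDFReal_nonneg _ _ _) (gaussianPDFReal_nonneg _ _ _)),
      abs_of_nonneg (mul_nonneg (by positivity) (gaussianPDFReal_nonneg _ _ _))]
    rw [mul_comm ((√(2 * π * ↑w))⁻¹) _]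
    refine mul_le_mul_of_nonneg_left ?_ (gaussianPDFReal_nonneg _ _ _)
    unfold gaussianPDFReal
    calc (√(2 * π * ↑w))⁻¹ * rexp (-(z - x - 0) ^ 2 / (2 * ↑w))
        ≤ (√(2 * π * ↑w))⁻¹ * 1 := by
          refine mul_le_mul_of_nonneg_left ?_ (by positivity)
          rw [Real.exp_le_one_iff]
          exact div_nonpos_of_nonpos_of_nonneg (neg_nonpos.mpr (sq_nonneg _)) (by positivity)
      _ = (√(2 * π * ↑w))⁻¹ := mul_one _
  unfold gaussianPDF
  calc ∫⁻ x, ENNReal.ofReal (gaussianPDFReal 0 v x) * ENNReal.ofReal (gaussianPDFReal 0 w (z - x))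
      = ∫⁻ x, ENNReal.ofReal (gaussianPDFReal 0 v x * gaussianPDFReal 0 w (z - x)) := by
        congr 1; ext x
        rw [ENNReal.ofReal_mul (gaussianPDFReal_nonneg _ _ _)]
    _ = ENNReal.ofReal (∫ x, gaussianPDFReal 0 v x * gaussianPDFReal 0 w (z - x)) := by
        rw [← ofReal_integral_eq_lintegral_ofReal hint
          (ae_of_all _ fun x => mul_nonneg (gaussianPDFReal_nonneg _ _ _) (gaussianPDFReal_nonneg _ _ _))]
    _ = ENNReal.ofReal (gaussianPDFReal 0 (v + w) z) := by
        rw [gauss_conv_pdfReal v w hv hw z]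

theorem gaussianReal_conv (v w : ℝ≥0) :
    ((gaussianReal 0 v).prod (gaussianReal 0 w)).map (fun p : ℝ × ℝ => p.1 + p.2)
      = gaussianReal 0 (v + w) := by
  by_cases hv : v = 0
  · subst hv
    rw [gaussianReal_zero_var]
    show Measure.conv (Measure.dirac 0) (gaussianReal 0 w) = _
    rw [zero_add]; simp
  by_cases hw : w = 0
  · subst hw
    rw [gaussianReal_zero_var]
    show Measure.conv (gaussianReal 0 v) (Measure.dirac 0) = _
    rw [add_zero]; simp
  ext s hs
  rw [Measure.map_apply measurable_add hs, Measure.prod_apply (measurable_add hs)]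
  have h1 : ∀ x : ℝ, gaussianReal 0 w (Prod.mk x ⁻¹' ((fun p : ℝ × ℝ => p.1 + p.2) ⁻¹' s))
      = ∫⁻ z, s.indicator (fun _ => (1:ℝ≥0∞)) z * gaussianPDF 0 w (z - x) := by
    intro x
    have hset : (Prod.mk x ⁻¹' ((fun p : ℝ × ℝ => p.1 + p.2) ⁻¹' s)) = {y : ℝ | x + y ∈ s} := rfl
    have hms : MeasurableSet {y : ℝ | x + y ∈ s} := by
      exact measurableSet_preimage (by fun_prop) hs
    rw [hset, gaussianReal_apply 0 hw, ← lintegral_indicator hms (gaussianPDF 0 w)]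
    calc ∫⁻ y, ({y : ℝ | x + y ∈ s}).indicator (gaussianPDF 0 w) y
        = ∫⁻ y, s.indicator (fun _ => (1:ℝ≥0∞)) (x + y) * gaussianPDF 0 w ((x + y) - x) := by
          congr 1; ext y
          by_cases hy : x + y ∈ s
          · simp [Set.indicator_of_mem, hy, Set.indicator_of_mem (show y ∈ {y : ℝ | x + y ∈ s} from hy)]
          · simp [Set.indicator_of_notMem, hy, Set.indicator_of_notMem (show y ∉ {y : ℝ | x + y ∈ s} from hy)]
      _ = ∫⁻ z, s.indicator (fun _ => (1:ℝ≥0∞)) z * gaussianPDF 0 w (z - x) := by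
          simp_rw [add_comm x]
          exact lintegral_add_right_eq_self (fun z => s.indicator (fun _ => (1:ℝ≥0∞)) z * gaussianPDF 0 w (z - x)) x
  simp_rw [h1]
  have hFmeas : Measurable (Function.uncurry fun x z =>
      s.indicator (fun _ => (1:ℝ≥0∞)) z * gaussianPDF 0 w (z - x)) := by
    apply Measurable.mul
    · exact (measurable_const.indicator hs).comp measurable_snd
    · exact (measurable_gaussianPDF 0 w).comp (measurable_snd.sub measurable_fst)
  rw [gaussianReal_of_var_ne_zero 0 hv,
    lintegral_withDensity_eq_lintegral_mul volume (measurable_gaussianPDF 0 v)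
      (Measurable.lintegral_prod_right hFmeas)]
  calc ∫⁻ x, gaussianPDF 0 v x * ∫⁻ z, s.indicator (fun _ => (1:ℝ≥0∞)) z * gaussianPDF 0 w (z - x)
      = ∫⁻ x, ∫⁻ z, gaussianPDF 0 v x * (s.indicator (fun _ => (1:ℝ≥0∞)) z * gaussianPDF 0 w (z - x)) := by
        congr 1; ext x
        rw [lintegral_const_mul _ (by
          exact ((measurable_const.indicator hs).mul
            ((measurable_gaussianPDF 0 w).comp (measurable_id.sub measurable_const))))]
    _ = ∫⁻ z, ∫⁻ x, gaussianPDF 0 v x * (s.indicator (fun _ => (1:ℝ≥0∞)) z * gaussianPDF 0 w (z - x)) := by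
        apply lintegral_lintegral_swap
        exact ((measurable_gaussianPDF 0 v).comp measurable_fst).mul hFmeas |>.aemeasurable
    _ = ∫⁻ z, s.indicator (fun _ => (1:ℝ≥0∞)) z * ∫⁻ x, gaussianPDF 0 v x * gaussianPDF 0 w (z - x) := by
        congr 1; ext z
        rw [← lintegral_const_mul _ (by
          exact (measurable_gaussianPDF 0 v).mul
            ((measurable_gaussianPDF 0 w).comp (measurable_const.sub measurable_id)))]
        congr 1; ext x; ring
    _ = ∫⁻ z, s.indicator (gaussianPDF 0 (v + w)) z := by
        congr 1; ext z
        rw [gauss_conv_pdf v w hv hw z]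
        by_cases hz : z ∈ s
        · simp [Set.indicator_of_mem hz]
        · simp [Set.indicator_of_notMem hz]
    _ = gaussianReal 0 (v + w) s := by
        rw [lintegral_indicator hs, ← gaussianReal_apply 0 (by simp [hv]) s]

theorem indep_add_gauss {Ω : Type*} [MeasurableSpace Ω] (μ : Measure Ω) [IsProbabilityMeasure μ]
    {X Y : Ω → ℝ} (hX : Measurable X) (hY : Measurable Y) (h : IndepFun X Y μ)
    (v w : ℝ≥0) (hXg : μ.map X = gaussianReal 0 v) (hYg : μ.map Y = gaussianReal 0 w) :
    μ.map (fun ω => X ω + Y ω) = gaussianReal 0 (v + w) := by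
  have hprod := (indepFun_iff_map_prod_eq_prod_map_map hX.aemeasurable hY.aemeasurable).mp h
  have heq : (fun ω => X ω + Y ω) = (fun p : ℝ × ℝ => p.1 + p.2) ∘ (fun ω => (X ω, Y ω)) := rfl
  rw [heq, ← Measure.map_map measurable_add (hX.prodMk hY), hprod, hXg, hYg, gaussianReal_conv]

theorem iIndep_sum_gauss {Ω : Type*} [MeasurableSpace Ω] (μ : Measure Ω) [IsProbabilityMeasure μ]
    {n : ℕ} (X : Fin n → Ω → ℝ) (hmeas : ∀ i, Measurable (X i))
    (hindep : iIndepFun X μ) (v : Fin n → ℝ≥0)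
    (hg : ∀ i, μ.map (X i) = gaussianReal 0 (v i)) (s : Finset (Fin n)) :
    μ.map (fun ω => ∑ i ∈ s, X i ω) = gaussianReal 0 (∑ i ∈ s, v i) := by
  classical
  induction s using Finset.induction_on with
  | empty =>
      simp only [Finset.sum_empty]
      rw [Measure.map_const, measure_univ, one_smul, gaussianReal_zero_var]
  | insert j s hi ih =>
      simp only [Finset.sum_insert hi]
      have hind2 : IndepFun (X j) (fun ω => ∑ i ∈ s, X i ω) μ := by
        have := (hindep.indepFun_finsetSum_of_notMem hmeas hi).symm
        have hsum : (∑ i ∈ s, X i) = fun ω => ∑ i ∈ s, X i ω := by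
          ext ω; simp [Finset.sum_apply]
        rwa [hsum] at this
      exact indep_add_gauss μ (hmeas j) (by fun_prop) hind2 _ _ (hg j) ih

theorem gauss_noatom (x : ℝ) : gaussianReal 0 1 {x} = 0 :=
  (gaussianReal_absolutelyContinuous 0 (by norm_num)) (measure_singleton x)

theorem gauss_Ici (m : ℝ) :
    gaussianReal 0 1 (Set.Ici m) = ENNReal.ofReal (1 - cdf (gaussianReal 0 1) m) := by
  have hno : ∀ x : ℝ, gaussianReal 0 1 {x} = 0 := gauss_noatom
  haveI : NullSingletonClass (gaussianReal 0 1) := ⟨hno⟩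
  have h1 : gaussianReal 0 1 (Set.Iio m) = gaussianReal 0 1 (Set.Iic m) :=
    measure_congr Iio_ae_eq_Iic
  have h2 : gaussianReal 0 1 (Set.Ici m) = 1 - gaussianReal 0 1 (Set.Iio m) := by
    rw [← Set.compl_Iio, measure_compl measurableSet_Iio (measure_ne_top _ _), measure_univ]
  rw [h2, h1, ← ofReal_cdf (μ := gaussianReal 0 1) m, ENNReal.ofReal_sub _ (cdf_nonneg _ m), ENNReal.ofReal_one]

theorem half_prob {Ω : Type*} [MeasurableSpace Ω] (μ : Measure Ω) [IsProbabilityMeasure μ]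
    {S : Ω → ℝ} (hS : Measurable S) (hmap : μ.map S = gaussianReal 0 1) (m : ℝ) :
    μ {ω | m ≤ S ω} = ENNReal.ofReal (1 - cdf (gaussianReal 0 1) m) := by
  have h : {ω | m ≤ S ω} = S ⁻¹' (Set.Ici m) := rfl
  rw [h, ← Measure.map_apply hS measurableSet_Ici, hmap, gauss_Ici]

/-- Closed form of the inner-product-based (halfspace) depth for a
finite-dimensional zero-mean Gaussian process, in RKHS coordinates:
`inf_{‖g‖_{H_K} = 1} P[⟨X - f_obs, g⟩_{H_K} ≥ 0] = 1 - Φ(‖f_obs‖_{H_K})`,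
where `Φ` is the standard normal CDF. -/
theorem ip_depth_closed_form_gaussian {Ω : Type*} [MeasurableSpace Ω]
    (μ : Measure Ω) [IsProbabilityMeasure μ]
    (P : ℕ) (lam : Fin P → NNReal) (hlam : ∀ p, 0 < lam p)
    (f : Fin P → Ω → ℝ) (hmeas : ∀ p, Measurable (f p))
    (hgauss : ∀ p, μ.map (f p) = gaussianReal 0 (lam p))
    (hindep : iIndepFun f μ)
    (c : Fin P → ℝ) (hc : c ≠ 0) :
    (⨅ g : {g : Fin P → ℝ // ∑ p, (g p) ^ 2 / (lam p : ℝ) = 1},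
        μ {ω | (0 : ℝ) ≤ ∑ p, (f p ω - c p) * (g : Fin P → ℝ) p / (lam p : ℝ)})
      = ENNReal.ofReal
          (1 - cdf (gaussianReal 0 1) (Real.sqrt (∑ p, (c p) ^ 2 / (lam p : ℝ)))) := by
  have hlam' : ∀ p, (0:ℝ) < lam p := fun p => by exact_mod_cast hlam p
  set T : ℝ := ∑ p, (c p) ^ 2 / (lam p : ℝ) with hT_def
  have hT : 0 < T := by
    obtain ⟨q, hq⟩ : ∃ q, c q ≠ 0 := by
      by_contra h
      push_neg at h
      exact hc (funext h)
    refine Finset.sum_pos' (fun p _ => by positivity) ⟨q, Finset.mem_univ q, ?_⟩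
    have := hlam' q
    positivity
  set r : ℝ := Real.sqrt T with hr_def
  have hr : 0 < r := Real.sqrt_pos.mpr hT
  have hr2 : r ^ 2 = T := Real.sq_sqrt hT.le
  -- key lemma: value of the depth at each admissible g
  have key : ∀ g : Fin P → ℝ, (∑ p, (g p) ^ 2 / (lam p : ℝ) = 1) →
      μ {ω | (0 : ℝ) ≤ ∑ p, (f p ω - c p) * g p / (lam p : ℝ)}
        = ENNReal.ofReal (1 - cdf (gaussianReal 0 1) (∑ p, c p * g p / (lam p : ℝ))) := by
    intro g hg1
    set a : Fin P → ℝ := fun p => g p / (lam p : ℝ) with ha_def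
    set m : ℝ := ∑ p, c p * g p / (lam p : ℝ) with hm_def
    set S : Ω → ℝ := fun ω => ∑ p, a p * f p ω with hS_def
    have hSmeas : Measurable S := by fun_prop
    have hSmap : μ.map S = gaussianReal 0 1 := by
      have hX : ∀ i, Measurable (fun ω => a i * f i ω) := fun i => (hmeas i).const_mul _
      have hXindep : iIndepFun (fun i => fun ω => a i * f i ω) μ := by
        have := hindep.comp (fun i => fun x : ℝ => a i * x) (fun i => measurable_const_mul _)
        exact this
      have hXg : ∀ i, μ.map (fun ω => a i * f i ω)
          = gaussianReal 0 (⟨(a i)^2, sq_nonneg _⟩ * lam i) := by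
        intro i
        have : (fun ω => a i * f i ω) = (fun x => a i * x) ∘ f i := rfl
        rw [this, ← Measure.map_map (measurable_const_mul _) (hmeas i), hgauss i,
          gaussianReal_map_const_mul (a i), mul_zero]
        rfl
      have := iIndep_sum_gauss μ _ hX hXindep _ hXg Finset.univ
      have hv1 : (∑ i, (⟨(a i)^2, sq_nonneg _⟩ * lam i : ℝ≥0)) = 1 := by
        have : ((∑ i, (⟨(a i)^2, sq_nonneg _⟩ * lam i : ℝ≥0)) : ℝ) = 1 := by
          push_cast [NNReal.coe_mk]
          rw [← hg1]
          refine Finset.sum_congr rfl fun p _ => ?_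
          have hl := (hlam' p).ne'
          rw [ha_def]
          change (g p / (lam p : ℝ)) ^ 2 * (lam p : ℝ) = g p ^ 2 / (lam p : ℝ)
          field_simp
        exact_mod_cast this
      rwa [hv1] at this
    have hsum : ∀ ω, ∑ p, (f p ω - c p) * g p / (lam p : ℝ) = S ω - m := by
      intro ω
      rw [hS_def, hm_def, ← Finset.sum_sub_distrib]
      refine Finset.sum_congr rfl fun p _ => ?_
      rw [ha_def]
      ring
    have hset : {ω | (0 : ℝ) ≤ ∑ p, (f p ω - c p) * g p / (lam p : ℝ)} = {ω | m ≤ S ω} := by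
      ext ω
      simp only [Set.mem_setOf_eq]
      rw [hsum ω, sub_nonneg]
    rw [hset, half_prob μ hSmeas hSmap m]
  -- the optimal g
  have hgstar : ∑ p, ((c p / r) : ℝ) ^ 2 / (lam p : ℝ) = 1 := by
    have : ∑ p, (c p / r) ^ 2 / (lam p : ℝ) = (∑ p, (c p) ^ 2 / (lam p : ℝ)) / r ^ 2 := by
      rw [Finset.sum_div]
      refine Finset.sum_congr rfl fun p _ => ?_
      field_simp
    rw [this, ← hT_def, ← hr2, hr2]
    field_simp
  refine le_antisymm ?_ ?_
  · refine iInf_le_of_le ⟨fun p => c p / r, hgstar⟩ ?_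
    rw [key _ hgstar]
    have hm : ∑ p, c p * (c p / r) / (lam p : ℝ) = r := by
      have : ∑ p, c p * (c p / r) / (lam p : ℝ) = (∑ p, (c p) ^ 2 / (lam p : ℝ)) / r := by
        rw [Finset.sum_div]
        refine Finset.sum_congr rfl fun p _ => ?_
        field_simp
      rw [this, ← hT_def, ← hr2]
      field_simp
    rw [hm]
  · refine le_iInf fun ⟨g, hg1⟩ => ?_
    rw [key g hg1]
    refine ENNReal.ofReal_le_ofReal (sub_le_sub_left ?_ 1)
    refine (monotone_cdf (μ := gaussianReal 0 1)) ?_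
    -- Cauchy-Schwarz
    have hcs : ∑ p, c p * g p / (lam p : ℝ)
        ≤ √(∑ p, (c p)^2 / (lam p : ℝ)) * √(∑ p, (g p)^2 / (lam p : ℝ)) := by
      have hrw : ∀ p : Fin P, c p * g p / (lam p : ℝ)
          = (c p / √(lam p)) * (g p / √(lam p)) := by
        intro p
        rw [div_mul_div_comm, Real.mul_self_sqrt (lam p).coe_nonneg]
      have hrw2 : ∀ (u : Fin P → ℝ) p, (u p / √(lam p)) ^ 2 = (u p)^2 / (lam p : ℝ) := by
        intro u p
        rw [div_pow, Real.sq_sqrt (lam p).coe_nonneg]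
      calc ∑ p, c p * g p / (lam p : ℝ)
          = ∑ p, (c p / √(lam p)) * (g p / √(lam p)) := Finset.sum_congr rfl fun p _ => hrw p
        _ ≤ √(∑ p, (c p / √(lam p))^2) * √(∑ p, (g p / √(lam p))^2) :=
            Real.sum_mul_le_sqrt_mul_sqrt _ _ _
        _ = √(∑ p, (c p)^2 / (lam p : ℝ)) * √(∑ p, (g p)^2 / (lam p : ℝ)) := by
            rw [Finset.sum_congr rfl fun p _ => hrw2 c p, Finset.sum_congr rfl fun p _ => hrw2 g p]
      
    rw [hg1, Real.sqrt_one, mul_one] at hcs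
    exact hcs
end

section
/- Let C be a covariance operator with orthonormal eigenfunctions {φ_p} and positive eigenvalues {λ_p}_{p=1}^∞ (infinitely many), and let f be a sample from GP(0, C). For each P, let D_P(f) = 1 − Φ(sqrt(Σ_{p=1}^P ⟨f,φ_p⟩²/λ_p)) be the depth of the P-th order truncation. Then D_P(f) → 0 almost surely as P → ∞. -/
open MeasureTheory ProbabilityTheory Filter

lemma aux_sqrt_tendsto_atTop : Tendsto Real.sqrt atTop atTop :=
  (tendsto_rpow_atTop (by norm_num : (0:ℝ) < 1/2)).congr
    (fun x => (Real.sqrt_eq_rpow x).symm)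

/-- Degeneracy of truncated halfspace depth in infinite dimensions: if the
Karhunen–Loève coefficients `f p ~ N(0, λ p)` are independent with `λ p > 0` for
all `p`, then the truncated depths
`D_P = 1 - Φ(√(∑_{p < P} (f p)²/λ p))` tend to `0` almost surely as `P → ∞`. -/
theorem truncated_depth_tendsto_zero {Ω : Type*} [MeasurableSpace Ω]
    (μ : Measure Ω) [IsProbabilityMeasure μ]
    (lam : ℕ → NNReal) (hlam : ∀ p, 0 < lam p)
    (f : ℕ → Ω → ℝ) (hmeas : ∀ p, Measurable (f p))
    (hgauss : ∀ p, μ.map (f p) = gaussianReal 0 (lam p))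
    (hindep : iIndepFun f μ) :
    ∀ᵐ ω ∂μ,
      Tendsto (fun P : ℕ =>
          1 - cdf (gaussianReal 0 1)
            (Real.sqrt (∑ p ∈ Finset.range P, (f p ω) ^ 2 / (lam p : ℝ))))
        atTop (nhds 0) := by
  classical
  -- the sets "the p-th normalized coefficient is large"
  set S : Set ℝ := {x : ℝ | 1 ≤ x ^ 2} with hS_def
  have hS_meas : MeasurableSet S := measurableSet_le measurable_const (measurable_id.pow_const 2)
  set B : ℕ → Set ℝ := fun p => {x : ℝ | (lam p : ℝ) ≤ x ^ 2} with hB_def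
  have hB_meas : ∀ p, MeasurableSet (B p) :=
    fun p => measurableSet_le measurable_const (measurable_id.pow_const 2)
  set s : ℕ → Set Ω := fun p => f p ⁻¹' B p with hs_def
  have hs_meas : ∀ p, MeasurableSet (s p) := fun p => (hmeas p) (hB_meas p)
  -- each s p has the same, positive, probability
  set c : ENNReal := gaussianReal 0 1 S with hc_def
  have hc_pos : c ≠ 0 := by
    intro h0
    have h1 : volume S = 0 :=
      gaussianReal_absolutelyContinuous' 0 (by norm_num : (1 : NNReal) ≠ 0) h0
    have h2 : Set.Icc (1:ℝ) 2 ⊆ S := by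
      intro x hx
      have : (1:ℝ) ≤ x := hx.1
      have : (1:ℝ) ≤ x ^ 2 := by nlinarith
      exact this
    have := measure_mono_null h2 h1
    simp [Real.volume_Icc] at this
  have hμs : ∀ p, μ (s p) = c := by
    intro p
    have hlp : (lam p : ℝ) ≠ 0 := by exact_mod_cast (hlam p).ne'
    have hlp_pos : (0:ℝ) < (lam p : ℝ) := by exact_mod_cast hlam p
    have h1 : μ (s p) = gaussianReal 0 (lam p) (B p) := by
      rw [hs_def, ← Measure.map_apply (hmeas p) (hB_meas p), hgauss p]
    have hsq : Real.sqrt (lam p) ^ 2 = (lam p : ℝ) := Real.sq_sqrt hlp_pos.le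
    have hmap : Measure.map (fun x => Real.sqrt (lam p) * x) (gaussianReal 0 1)
        = gaussianReal 0 (lam p) := by
      rw [gaussianReal_map_const_mul]
      congr 1
      · ring
      · ext
        simp [hsq]
    have hpre : (fun x => Real.sqrt (lam p) * x) ⁻¹' B p = S := by
      ext x
      simp only [hB_def, hS_def, Set.mem_preimage, Set.mem_setOf_eq, mul_pow, hsq]
      constructor
      · intro h
        have := (div_le_div_iff_of_pos_right hlp_pos).2 h
        rwa [div_self hlp, mul_comm, mul_div_assoc, div_self hlp, mul_one] at this
      · intro h
        nlinarith
    rw [h1, ← hmap, Measure.map_apply (measurable_const_mul _) (hB_meas p), hpre]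
  -- the sets are independent
  have hind : iIndepSet s μ := by
    rw [iIndepSet_iff_meas_biInter hs_meas]
    intro t
    exact hindep.measure_inter_preimage_eq_mul t (fun i _ => hB_meas i)
  -- second Borel-Cantelli
  have htsum : (∑' n, μ (s n)) = ⊤ := by
    simp only [hμs]
    exact ENNReal.tsum_const_eq_top_of_ne_zero hc_pos
  have hlimsup := measure_limsup_eq_one hs_meas hind htsum
  have hae : ∀ᵐ ω ∂μ, ω ∈ limsup s atTop := by
    rw [ae_iff]
    have : {ω | ¬ ω ∈ limsup s atTop} = (limsup s atTop)ᶜ := rfl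
    rw [this, measure_compl, hlimsup, measure_univ]
    · simp
    · exact MeasurableSet.measurableSet_limsup (fun n => hs_meas n)
    · exact measure_ne_top _ _
  filter_upwards [hae] with ω hω
  -- the partial sums tend to infinity
  have hfreq : ∃ᶠ n in atTop, ω ∈ s n := mem_limsup_iff_frequently_mem.mp hω
  obtain ⟨φ, hφ_mono, hφ⟩ := extraction_of_frequently_atTop hfreq
  set g : ℕ → ℝ := fun p => (f p ω) ^ 2 / (lam p : ℝ) with hg_def
  have hg_nonneg : ∀ p, 0 ≤ g p := fun p => by positivity
  have hg_one : ∀ n, 1 ≤ g (φ n) := by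
    intro n
    have h := hφ n
    have hlp_pos : (0:ℝ) < (lam (φ n) : ℝ) := by exact_mod_cast hlam (φ n)
    have : (lam (φ n) : ℝ) ≤ (f (φ n) ω) ^ 2 := h
    rw [hg_def]
    rw [le_div_iff₀ hlp_pos, one_mul]
    exact this
  have hT_mono : Monotone (fun P => ∑ p ∈ Finset.range P, g p) := by
    intro a b hab
    exact Finset.sum_le_sum_of_subset_of_nonneg (Finset.range_subset_range.2 hab)
      (fun i _ _ => hg_nonneg i)
  have hT_big : ∀ n : ℕ, (n + 1 : ℝ) ≤ ∑ p ∈ Finset.range (φ n + 1), g p := by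
    intro n
    have hsub : (Finset.range (n+1)).image φ ⊆ Finset.range (φ n + 1) := by
      intro x hx
      simp only [Finset.mem_image, Finset.mem_range] at hx ⊢
      obtain ⟨k, hk, rfl⟩ := hx
      have : φ k ≤ φ n := hφ_mono.monotone (Nat.lt_succ_iff.mp hk)
      omega
    calc (n + 1 : ℝ) = ((Finset.range (n+1)).image φ).card • (1:ℝ) := by
          rw [Finset.card_image_of_injective _ hφ_mono.injective, Finset.card_range]
          simp
      _ ≤ ∑ p ∈ (Finset.range (n+1)).image φ, g p := by
          apply Finset.card_nsmul_le_sum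
          intro x hx
          simp only [Finset.mem_image] at hx
          obtain ⟨k, _, rfl⟩ := hx
          exact hg_one k
      _ ≤ ∑ p ∈ Finset.range (φ n + 1), g p :=
          Finset.sum_le_sum_of_subset_of_nonneg hsub (fun i _ _ => hg_nonneg i)
  have hT : Tendsto (fun P => ∑ p ∈ Finset.range P, g p) atTop atTop := by
    apply tendsto_atTop_atTop_of_monotone hT_mono
    intro b
    refine ⟨φ ⌈b⌉₊ + 1, le_trans ?_ (hT_big ⌈b⌉₊)⟩
    calc b ≤ (⌈b⌉₊ : ℝ) := Nat.le_ceil b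
      _ ≤ (⌈b⌉₊ : ℝ) + 1 := by linarith
  -- conclude
  have hcdf : Tendsto (fun P : ℕ => cdf (gaussianReal 0 1)
      (Real.sqrt (∑ p ∈ Finset.range P, g p))) atTop (nhds 1) :=
    (tendsto_cdf_atTop (gaussianReal 0 1)).comp (aux_sqrt_tendsto_atTop.comp hT)
  have := (tendsto_const_nhds (x := (1:ℝ)) (f := atTop)).sub hcdf
  rw [sub_self] at this
  exact this
end
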